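/- Assume h ≥ δ^μ, let h̃ := min{ h, (h + δ^μ)/2 }, and assume the positive reals λ₁,…,λ_d satisfy (λ₁ + ⋯ + λ_{j−1})/λ_j < h̃ for all j = 2,…,d. Then for each q ∈ {1,…,N}, the map 𝐣 ↦ a_q^𝐣 is strictly increasing with respect to the row-major order on {−1,…,J−1}^d (i.e., the lexicographic order on the reversed tuples (j_d, j_{d−1}, …, j₁)): if (j_d,…,j₁) precedes (j′_d,…,j′₁) lexicographically, then a_q^𝐣 < a_q^{𝐣′}. Moreover a_q^{(−1,…,−1)} = 0 and a_q^{(J−1,…,J−1)} = λ₁ + ⋯ + λ_d. -/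
import Mathlib

set_option maxHeartbeats 1000000

noncomputable section

/-- The smeared-out Heaviside shape function `S(z) = z - sin(2πz)/(2π)`. -/
def Sfun (z : ℝ) : ℝ := z - Real.sin (2 * Real.pi * z) / (2 * Real.pi)

/-- The quintic shape function `P(z) = z³(6z² - 15z + 10)`. -/
def Pfun (z : ℝ) : ℝ := z ^ 3 * (6 * z ^ 2 - 15 * z + 10)

/-- The inner function `ψ_q(x) = φ(x + (1-q)δ) - φ((1-q)δ)`. -/
def psi (φ : ℝ → ℝ) (δ : ℝ) (q : ℕ) (x : ℝ) : ℝ :=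
  φ (x + (1 - (q : ℝ)) * δ) - φ ((1 - (q : ℝ)) * δ)

/-- The hypercube center coordinate `c_q^j`, with the boundary conventions
`c_q^{-1} = 0` and `c_q^{J-1} = 1`. -/
def center (h δ : ℝ) (J : ℕ) (q : ℕ) (j : ℤ) : ℝ :=
  if j = -1 then 0
  else if j = (J : ℤ) - 1 then 1
  else (j : ℝ) * h + (h + δ) / 2 + ((q : ℝ) - 1) * δ

/-- The mapped hypercube center `a_q^jv = Ψ_q(𝐜_q^jv) = Σ_p λ_p ψ_q(c_q^{j_p})`. -/
def amap (φ : ℝ → ℝ) (h δ : ℝ) (J : ℕ) {d : ℕ} (lam : Fin d → ℝ)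
    (q : ℕ) (jv : Fin d → ℤ) : ℝ :=
  ∑ p, lam p * psi φ δ q (center h δ J q (jv p))

/-- Auxiliary: the value of ψ_q at the center with index j. -/
def Vv (φ : ℝ → ℝ) (h δ : ℝ) (J q : ℕ) (j : ℤ) : ℝ :=
  psi φ δ q (center h δ J q j)

/-- for Sprecher-like λ, the mapped centers are strictly increasing in row-major order. -/
theorem amap_rowMajor_strictMono
    (N : ℕ) (hN : 2 ≤ N) (δ : ℝ) (hδ : 0 < δ) (μ : ℝ) (hμ : 0 < μ)
    (h : ℝ) (hh : h = (N : ℝ) * δ)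
    (φ : ℝ → ℝ)
    (hφS : ∀ j : ℤ, ∀ t ∈ Set.Icc ((j : ℝ) * h) ((j : ℝ) * h + δ),
      φ t = (j : ℝ) * h + δ ^ μ * Sfun ((t - (j : ℝ) * h) / δ))
    (hφP : ∀ j : ℤ, ∀ t ∈ Set.Icc ((j : ℝ) * h + δ) (((j : ℝ) + 1) * h),
      φ t = (j : ℝ) * h + δ ^ μ + (h - δ ^ μ) * Pfun ((t - (j : ℝ) * h - δ) / (h - δ)))
    (J : ℕ) (hJ : 0 < J) (hJh : (J : ℝ) * h = 1)
    (d : ℕ) (hd : 2 ≤ d) (lam : Fin d → ℝ) (hlam : ∀ p, 0 < lam p)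
    (hle : δ ^ μ ≤ h)
    (hsprecher : ∀ j : Fin d, j.val ≠ 0 →
      (∑ i ∈ Finset.univ.filter (fun i => i < j), lam i) / lam j <
        min h ((h + δ ^ μ) / 2)) :
    ∀ q : ℕ, 1 ≤ q → q ≤ N →
      (∀ jv jv' : Fin d → ℤ,
        (∀ p, -1 ≤ jv p ∧ jv p ≤ (J : ℤ) - 1) →
        (∀ p, -1 ≤ jv' p ∧ jv' p ≤ (J : ℤ) - 1) →
        (∃ m : Fin d, jv m < jv' m ∧ ∀ l, m < l → jv l = jv' l) →
        amap φ h δ J lam q jv < amap φ h δ J lam q jv') ∧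
      amap φ h δ J lam q (fun _ => -1) = 0 ∧
      amap φ h δ J lam q (fun _ => (J : ℤ) - 1) = ∑ p, lam p := by
  intro q hq1 hq2
  -- basic numeric facts
  have hN2 : (2:ℝ) ≤ (N:ℝ) := by exact_mod_cast hN
  have hq1' : (1:ℝ) ≤ (q:ℝ) := by exact_mod_cast hq1
  have hq2' : (q:ℝ) ≤ (N:ℝ) := by exact_mod_cast hq2
  have hJ1 : (1:ℝ) ≤ (J:ℝ) := by exact_mod_cast hJ
  have hδμ : (0:ℝ) < δ ^ μ := Real.rpow_pos_of_pos hδ μ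
  have hh0 : 0 < h := by nlinarith
  have hδh : δ < h := by nlinarith
  have hhδ0 : 0 < h - δ := by linarith
  set M : ℝ := min h ((h + δ ^ μ) / 2) with hM
  have hMh : M ≤ h := min_le_left _ _
  have hM2 : M ≤ (h + δ ^ μ) / 2 := min_le_right _ _
  have hMpos : 0 < M := lt_min hh0 (by linarith)
  set s : ℝ := (h - (q:ℝ) * δ) / (h - δ) with hs
  have hs0 : 0 ≤ s := div_nonneg (by nlinarith) hhδ0.le
  have hs1 : s ≤ 1 := by rw [hs, div_le_one hhδ0]; nlinarith
  have hPs0 : 0 ≤ Pfun s := by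
    have h1 : 0 ≤ s ^ 3 := pow_nonneg hs0 3
    have h2 : 0 ≤ 6 * s ^ 2 - 15 * s + 10 := by nlinarith [sq_nonneg (s - 1)]
    exact mul_nonneg h1 h2
  have hPs1 : Pfun s ≤ 1 := by
    have h1 : 0 ≤ (1 - s) ^ 3 := pow_nonneg (by linarith) 3
    have h2 : 0 ≤ 6 * s ^ 2 + 3 * s + 1 := by nlinarith
    unfold Pfun
    nlinarith [mul_nonneg h1 h2]
  -- value of φ at the base point
  have hB : φ ((1 - (q:ℝ)) * δ) = -h + δ ^ μ + (h - δ ^ μ) * Pfun s := by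
    have hmem : (1 - (q:ℝ)) * δ ∈
        Set.Icc ((((-1:ℤ)):ℝ) * h + δ) (((((-1:ℤ)):ℝ) + 1) * h) :=
      Set.mem_Icc.mpr ⟨by push_cast; nlinarith, by push_cast; nlinarith⟩
    rw [hφP (-1) _ hmem]
    have harg : ((1 - (q:ℝ)) * δ - (((-1:ℤ)):ℝ) * h - δ) / (h - δ) = s := by
      rw [hs]; push_cast; ring
    rw [harg]; push_cast; ring
  have hBle : φ ((1 - (q:ℝ)) * δ) ≤ 0 := by rw [hB]; nlinarith
  have hBge : δ ^ μ - h ≤ φ ((1 - (q:ℝ)) * δ) := by rw [hB]; nlinarith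
  -- values at centers
  have hVneg : Vv φ h δ J q (-1) = 0 := by
    simp [Vv, psi, center]
  have hVtop : Vv φ h δ J q ((J:ℤ) - 1) = 1 := by
    have hc : center h δ J q ((J:ℤ) - 1) = 1 := by
      unfold center
      rw [if_neg (by omega), if_pos rfl]
    show psi φ δ q (center h δ J q ((J:ℤ) - 1)) = 1
    rw [hc]
    show φ (1 + (1 - (q:ℝ)) * δ) - φ ((1 - (q:ℝ)) * δ) = 1
    have hmem : (1 + (1 - (q:ℝ)) * δ) ∈
        Set.Icc (((((J:ℤ) - 1 : ℤ)):ℝ) * h + δ) ((((((J:ℤ) - 1 : ℤ)):ℝ) + 1) * h) :=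
      Set.mem_Icc.mpr ⟨by push_cast; nlinarith, by push_cast; nlinarith⟩
    rw [hφP ((J:ℤ) - 1) _ hmem, hB]
    have harg : (1 + (1 - (q:ℝ)) * δ - ((((J:ℤ) - 1 : ℤ)):ℝ) * h - δ) / (h - δ) = s := by
      rw [hs]
      congr 1
      push_cast
      linarith
    rw [harg]
    push_cast
    linarith
  have hVmid : ∀ j : ℤ, 0 ≤ j → j ≤ (J:ℤ) - 2 →
      Vv φ h δ J q j = (j:ℝ) * h + (h + δ ^ μ) / 2 - φ ((1 - (q:ℝ)) * δ) := by
    intro j h0 h2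
    have hc : center h δ J q j = (j:ℝ) * h + (h + δ) / 2 + ((q:ℝ) - 1) * δ := by
      unfold center
      rw [if_neg (by omega), if_neg (by omega)]
    show φ (center h δ J q j + (1 - (q:ℝ)) * δ) - φ ((1 - (q:ℝ)) * δ) = _
    rw [hc, show (j:ℝ) * h + (h + δ) / 2 + ((q:ℝ) - 1) * δ + (1 - (q:ℝ)) * δ
        = (j:ℝ) * h + (h + δ) / 2 from by ring]
    have hmem : ((j:ℝ) * h + (h + δ) / 2) ∈
        Set.Icc ((j:ℝ) * h + δ) (((j:ℝ) + 1) * h) :=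
      Set.mem_Icc.mpr ⟨by linarith, by nlinarith⟩
    rw [hφP j _ hmem]
    have harg : ((j:ℝ) * h + (h + δ) / 2 - (j:ℝ) * h - δ) / (h - δ) = 1 / 2 := by
      field_simp
      ring
    rw [harg, show Pfun (1/2) = 1/2 from by norm_num [Pfun]]
    ring
  -- the gap lemma
  have hgap : ∀ j j' : ℤ, -1 ≤ j → j < j' → j' ≤ (J:ℤ) - 1 →
      Vv φ h δ J q j + M ≤ Vv φ h δ J q j' := by
    intro j j' hj hjj hj'
    rcases eq_or_ne j (-1) with rfl | hj0
    · rcases eq_or_ne j' ((J:ℤ) - 1) with rfl | hj'0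
      · rw [hVneg, hVtop]
        nlinarith
      · have h0' : 0 ≤ j' := by omega
        have h2' : j' ≤ (J:ℤ) - 2 := by omega
        rw [hVneg, hVmid j' h0' h2']
        have hj'r : (0:ℝ) ≤ (j':ℝ) := by exact_mod_cast h0'
        nlinarith
    · have hj0' : 0 ≤ j := by omega
      rcases eq_or_ne j' ((J:ℤ) - 1) with rfl | hj'0
      · have hj2 : j ≤ (J:ℤ) - 2 := by omega
        rw [hVmid j hj0' hj2, hVtop]
        have hjr : (j:ℝ) ≤ (J:ℝ) - 2 := by
          have h' : ((j:ℤ):ℝ) ≤ (((J:ℤ) - 2 : ℤ):ℝ) := by exact_mod_cast hj2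
          push_cast at h'
          linarith
        nlinarith [mul_nonneg (by linarith : (0:ℝ) ≤ (J:ℝ) - 2 - (j:ℝ)) hh0.le]
      · have h0' : 0 ≤ j' := by omega
        have h2' : j' ≤ (J:ℤ) - 2 := by omega
        rw [hVmid j hj0' (by omega), hVmid j' h0' h2']
        have hjj' : (j:ℝ) + 1 ≤ (j':ℝ) := by
          have : j + 1 ≤ j' := by omega
          exact_mod_cast this
        nlinarith [mul_nonneg (by linarith : (0:ℝ) ≤ (j':ℝ) - (j:ℝ) - 1) hh0.le]
  -- bounds
  have hV0 : ∀ j : ℤ, -1 ≤ j → j ≤ (J:ℤ) - 1 → 0 ≤ Vv φ h δ J q j := by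
    intro j hj hj'
    rcases eq_or_ne j (-1) with rfl | hj0
    · rw [hVneg]
    · have := hgap (-1) j (le_refl _) (by omega) hj'
      rw [hVneg] at this
      linarith
  have hV1 : ∀ j : ℤ, -1 ≤ j → j ≤ (J:ℤ) - 1 → Vv φ h δ J q j ≤ 1 := by
    intro j hj hj'
    rcases eq_or_ne j ((J:ℤ) - 1) with rfl | hj0
    · rw [hVtop]
    · have := hgap j ((J:ℤ) - 1) hj (by omega) (le_refl _)
      rw [hVtop] at this
      linarith
  have hrw : ∀ w : Fin d → ℤ,
      amap φ h δ J lam q w = ∑ p, lam p * Vv φ h δ J q (w p) := fun _ => rfl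
  refine ⟨?_, ?_, ?_⟩
  · rintro jv jv' hjv hjv' ⟨m, hmlt, hmeq⟩
    rw [hrw, hrw, ← sub_pos, ← Finset.sum_sub_distrib]
    have hDrw : ∀ p : Fin d, lam p * Vv φ h δ J q (jv' p) - lam p * Vv φ h δ J q (jv p)
        = lam p * (Vv φ h δ J q (jv' p) - Vv φ h δ J q (jv p)) := fun p => by ring
    rw [Finset.sum_congr rfl (fun p _ => hDrw p)]
    set D : Fin d → ℝ := fun p => lam p * (Vv φ h δ J q (jv' p) - Vv φ h δ J q (jv p))
      with hD
    have hDz : ∀ p, m < p → D p = 0 := by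
      intro p hp
      simp [hD, hmeq p hp]
    have hsplit : ∑ p, D p = D m + ∑ p ∈ Finset.univ.filter (fun i => i < m), D p := by
      rw [← Finset.sum_insert (show m ∉ Finset.univ.filter (fun i => i < m) from by simp)]
      refine (Finset.sum_subset (Finset.subset_univ _) ?_).symm
      intro p _ hp
      simp only [Finset.mem_insert, Finset.mem_filter, Finset.mem_univ, true_and] at hp
      push_neg at hp
      exact hDz p (lt_of_le_of_ne hp.2 (Ne.symm hp.1))
    have hDm : lam m * M ≤ D m := by
      have hg := hgap (jv m) (jv' m) (hjv m).1 hmlt (hjv' m).2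
      have hge : M ≤ Vv φ h δ J q (jv' m) - Vv φ h δ J q (jv m) := by linarith
      exact mul_le_mul_of_nonneg_left hge (hlam m).le
    have hDp : ∀ p ∈ Finset.univ.filter (fun i => i < m), -lam p ≤ D p := by
      intro p _
      have h1 : (-1:ℝ) ≤ Vv φ h δ J q (jv' p) - Vv φ h δ J q (jv p) := by
        have := hV0 (jv' p) (hjv' p).1 (hjv' p).2
        have := hV1 (jv p) (hjv p).1 (hjv p).2
        linarith
      have := mul_le_mul_of_nonneg_left h1 (hlam p).le
      have hD' : D p = lam p * (Vv φ h δ J q (jv' p) - Vv φ h δ J q (jv p)) := rfl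
      nlinarith
    have hsumlt : ∑ p ∈ Finset.univ.filter (fun i => i < m), lam p < lam m * M := by
      by_cases hm0 : m.val = 0
      · have hempty : ∀ p : Fin d, ¬ p < m := by
          intro p hp
          rw [Fin.lt_def, hm0] at hp
          omega
        rw [Finset.filter_false_of_mem (fun p _ => hempty p), Finset.sum_empty]
        exact mul_pos (hlam m) hMpos
      · have := hsprecher m hm0
        rw [div_lt_iff₀ (hlam m)] at this
        calc ∑ p ∈ Finset.univ.filter (fun i => i < m), lam p
            < M * lam m := this
          _ = lam m * M := by ring
    have hsum1 : ∑ p ∈ Finset.univ.filter (fun i => i < m), (-lam p)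
        ≤ ∑ p ∈ Finset.univ.filter (fun i => i < m), D p := Finset.sum_le_sum hDp
    rw [Finset.sum_neg_distrib] at hsum1
    rw [hsplit]
    linarith
  · rw [hrw]
    simp [hVneg]
  · rw [hrw]
    simp [hVtop]
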